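/- Let {X_t}_{t≤T} be a real-valued martingale difference sequence adapted to a filtration {F_t}, with |X_t| ≤ R almost surely. Then for any η ∈ (0, 1/R], with probability at least 1−δ, ∑_{t=1}^T X_t ≤ η·∑_{t=1}^T E[X_t² | F_{t−1}] + log(1/δ)/η. -/

import Mathlib

open MeasureTheory ProbabilityTheory

/-- Freedman's inequality: for a martingale difference sequence `X_t` with
`|X_t| ≤ R` a.s., for any `η ∈ (0, 1/R]`, with probability at least `1 − δ`,
`∑_{t=1}^T X_t ≤ η·∑_{t=1}^T E[X_t² | F_{t−1}] + log(1/δ)/η`. -/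
lemma exp_le_one_add_add_sq {x : ℝ} (h : |x| ≤ 1) : Real.exp x ≤ 1 + x + x ^ 2 := by
  have h2 := Real.exp_bound h (by norm_num : 0 < 2)
  have hs : ∑ m ∈ Finset.range 2, x ^ m / m.factorial = 1 + x := by
    simp [Finset.sum_range_succ]
  rw [hs] at h2
  have h3 := (abs_sub_le_iff.1 h2).1
  rw [sq_abs] at h3
  norm_num [Nat.factorial] at h3
  nlinarith [sq_nonneg x]

lemma integrable_of_ae_bound {Ω : Type*} {m0 : MeasurableSpace Ω} {μ : Measure Ω}
    [IsFiniteMeasure μ] {f : Ω → ℝ} {C : ℝ} (hf : AEStronglyMeasurable f μ)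
    (h : ∀ᵐ ω ∂μ, |f ω| ≤ C) : Integrable f μ := by
  refine (integrable_const C).mono' hf ?_
  simpa [Real.norm_eq_abs] using h

lemma freedman_key
    {Ω : Type*} {m0 : MeasurableSpace Ω} (μ : Measure Ω) [IsProbabilityMeasure μ]
    (ℱ : Filtration ℕ m0) (X : ℕ → Ω → ℝ) (R η : ℝ)
    (hR : 0 < R) (hadapted : Adapted ℱ X)
    (hint : ∀ t, Integrable (X t) μ)
    (hmd : ∀ t, 1 ≤ t → μ[X t | ℱ (t - 1)] =ᵐ[μ] 0)
    (hbdd : ∀ t, ∀ᵐ ω ∂μ, |X t ω| ≤ R)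
    (hη : 0 < η) (hηR : η ≤ 1 / R)
    (V : ℕ → Ω → ℝ) (hV : ∀ t, V t = μ[fun ω' => (X t ω') ^ 2 | ℱ (t - 1)]) :
    ∀ n, (∫ ω, Real.exp (η * ∑ t ∈ Finset.Icc 1 n, X t ω
        - η ^ 2 * ∑ t ∈ Finset.Icc 1 n, V t ω) ∂μ) ≤ 1 := by
  have hηR' : η * R ≤ 1 := (le_div_iff₀ hR).1 hηR
  -- measurability of X and V
  have hXm : ∀ t, Measurable (X t) := fun t => (hadapted t).mono (ℱ.le t) le_rfl
  have hVsm : ∀ t, StronglyMeasurable[ℱ (t - 1)] (V t) := by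
    intro t; rw [hV t]; exact stronglyMeasurable_condExp
  have hVm : ∀ t, Measurable (V t) := fun t => ((hVsm t).mono (ℱ.le (t - 1))).measurable
  -- integrability of X^2
  have hX2int : ∀ t, Integrable (fun ω => (X t ω) ^ 2) μ := by
    intro t
    refine integrable_of_ae_bound ((hXm t).pow measurable_const).aestronglyMeasurable
      (C := R ^ 2) ?_
    filter_upwards [hbdd t] with ω hω
    rw [abs_pow]
    exact pow_le_pow_left₀ (abs_nonneg _) hω 2
  -- a.e. bounds on V
  have hVnn : ∀ t, ∀ᵐ ω ∂μ, 0 ≤ V t ω := by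
    intro t; rw [hV t]
    exact condExp_nonneg (Filter.Eventually.of_forall fun ω => sq_nonneg _)
  have hVle : ∀ t, ∀ᵐ ω ∂μ, V t ω ≤ R ^ 2 := by
    intro t; rw [hV t]
    have h1 : (fun ω => (X t ω) ^ 2) ≤ᵐ[μ] fun _ => R ^ 2 := by
      filter_upwards [hbdd t] with ω hω
      calc (X t ω) ^ 2 = |X t ω| ^ 2 := (sq_abs _).symm
        _ ≤ R ^ 2 := pow_le_pow_left₀ (abs_nonneg _) hω 2
    have := condExp_mono (m := ℱ (t - 1)) (hX2int t) (integrable_const (R ^ 2)) h1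
    filter_upwards [this] with ω hω
    simpa [condExp_const (ℱ.le (t - 1))] using hω
  have hball : ∀ᵐ ω ∂μ, ∀ t, |X t ω| ≤ R := ae_all_iff.2 hbdd
  have hVnn' : ∀ᵐ ω ∂μ, ∀ t, 0 ≤ V t ω := ae_all_iff.2 hVnn
  have hVle' : ∀ᵐ ω ∂μ, ∀ t, V t ω ≤ R ^ 2 := ae_all_iff.2 hVle
  intro n
  induction n with
  | zero =>
    simp
  | succ n ih =>
    have hn1 : (1 : ℕ) ≤ n + 1 := by omega
    set F : Ω → ℝ := fun ω => Real.exp (η * ∑ t ∈ Finset.Icc 1 n, X t ω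
        - η ^ 2 * ∑ t ∈ Finset.Icc 1 n, V t ω - η ^ 2 * V (n + 1) ω) with hF
    set G : Ω → ℝ := fun ω => Real.exp (η * X (n + 1) ω) with hG
    have hsplit : (fun ω => Real.exp (η * ∑ t ∈ Finset.Icc 1 (n + 1), X t ω
        - η ^ 2 * ∑ t ∈ Finset.Icc 1 (n + 1), V t ω)) = fun ω => F ω * G ω := by
      funext ω
      rw [hF, hG, ← Real.exp_add, Finset.sum_Icc_succ_top hn1, Finset.sum_Icc_succ_top hn1]
      ring_nf
    -- measurability of F wrt ℱ n
    have hFm : Measurable[ℱ n] F := by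
      have h1 : Measurable[ℱ n] fun ω => ∑ t ∈ Finset.Icc 1 n, X t ω :=
        Finset.measurable_sum _ fun t ht =>
          (hadapted t).mono (ℱ.mono (Finset.mem_Icc.1 ht).2) le_rfl
      have h2 : Measurable[ℱ n] fun ω => ∑ t ∈ Finset.Icc 1 n, V t ω :=
        Finset.measurable_sum _ fun t ht =>
          ((hVsm t).mono (ℱ.mono (by
            have := (Finset.mem_Icc.1 ht).2; omega : t - 1 ≤ n))).measurable
      have h3 : Measurable[ℱ n] (V (n + 1)) :=
        ((hVsm (n + 1)).mono (ℱ.mono (by omega : n + 1 - 1 ≤ n))).measurable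
      exact (((measurable_const.mul h1).sub (measurable_const.mul h2)).sub
        (measurable_const.mul h3)).exp
    have hFm0 : Measurable F := hFm.mono (ℱ.le n) le_rfl
    -- bounds
    have hFnn : ∀ ω, 0 ≤ F ω := fun ω => (Real.exp_pos _).le
    have hFbd : ∀ᵐ ω ∂μ, |F ω| ≤ Real.exp (η * (n * R)) := by
      filter_upwards [hball, hVnn'] with ω h1 h2
      rw [abs_of_nonneg (hFnn ω), hF]
      apply Real.exp_le_exp.2
      have hs : ∑ t ∈ Finset.Icc 1 n, X t ω ≤ n * R := by
        calc ∑ t ∈ Finset.Icc 1 n, X t ω ≤ ∑ t ∈ Finset.Icc 1 n, R :=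
          Finset.sum_le_sum fun t _ => (abs_le.1 (h1 t)).2
        _ = n * R := by rw [Finset.sum_const, Nat.card_Icc]; simp
      have hw : 0 ≤ ∑ t ∈ Finset.Icc 1 n, V t ω :=
        Finset.sum_nonneg fun t _ => h2 t
      nlinarith [h2 (n + 1), sq_nonneg η, mul_le_mul_of_nonneg_left hs hη.le]
    have hFint : Integrable F μ :=
      integrable_of_ae_bound hFm0.aestronglyMeasurable hFbd
    have hGbd : ∀ᵐ ω ∂μ, |G ω| ≤ Real.exp (η * R) := by
      filter_upwards [hbdd (n + 1)] with ω hω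
      rw [hG, abs_of_nonneg (Real.exp_pos _).le]
      exact Real.exp_le_exp.2 (by nlinarith [(abs_le.1 hω).2])
    have hGm : Measurable G := (measurable_const.mul (hXm (n + 1))).exp
    have hGint : Integrable G μ := integrable_of_ae_bound hGm.aestronglyMeasurable hGbd
    have hFGint : Integrable (F * G) μ := by
      refine integrable_of_ae_bound (hFm0.mul hGm).aestronglyMeasurable
        (C := Real.exp (η * (n * R)) * Real.exp (η * R)) ?_
      filter_upwards [hFbd, hGbd] with ω h1 h2
      rw [Pi.mul_apply, abs_mul]
      exact mul_le_mul h1 h2 (abs_nonneg _) (Real.exp_pos _).le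
    -- pull-out property
    have hpull : μ[F * G | ℱ n] =ᵐ[μ] F * μ[G | ℱ n] :=
      condExp_mul_of_stronglyMeasurable_left hFm.stronglyMeasurable hFGint hGint
    -- conditional expectation bound on G
    have hQint : Integrable (fun ω => 1 + η * X (n + 1) ω + η ^ 2 * (X (n + 1) ω) ^ 2) μ := by
      refine (((integrable_const 1).add ((hint (n + 1)).const_mul η)).add
        ((hX2int (n + 1)).const_mul (η ^ 2)))
    have hGQ : G ≤ᵐ[μ] fun ω => 1 + η * X (n + 1) ω + η ^ 2 * (X (n + 1) ω) ^ 2 := by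
      filter_upwards [hbdd (n + 1)] with ω hω
      rw [hG]
      have habs : |η * X (n + 1) ω| ≤ 1 := by
        rw [abs_mul, abs_of_nonneg hη.le]
        calc η * |X (n + 1) ω| ≤ η * R := by nlinarith
          _ ≤ 1 := hηR'
      calc Real.exp (η * X (n + 1) ω) ≤ 1 + η * X (n + 1) ω + (η * X (n + 1) ω) ^ 2 :=
        exp_le_one_add_add_sq habs
        _ = 1 + η * X (n + 1) ω + η ^ 2 * (X (n + 1) ω) ^ 2 := by ring
    have hcondQ : (μ[fun ω => 1 + η * X (n + 1) ω + η ^ 2 * (X (n + 1) ω) ^ 2 | ℱ n])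
        =ᵐ[μ] fun ω => 1 + η ^ 2 * V (n + 1) ω := by
      have he : (fun ω => 1 + η * X (n + 1) ω + η ^ 2 * (X (n + 1) ω) ^ 2)
          = (fun _ => (1 : ℝ)) + (η • X (n + 1)) + (η ^ 2 • fun ω => (X (n + 1) ω) ^ 2) := by
        funext ω; simp [smul_eq_mul]
      rw [he]
      have h1 := condExp_add (m := ℱ n) (μ := μ)
        ((integrable_const (1 : ℝ)).add ((hint (n + 1)).smul η))
        ((hX2int (n + 1)).smul (η ^ 2))
      have h2 := condExp_add (m := ℱ n) (μ := μ)
        (integrable_const (1 : ℝ)) ((hint (n + 1)).smul η)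
      have h3 := condExp_smul (m := ℱ n) (μ := μ) η (X (n + 1))
      have h4 := condExp_smul (m := ℱ n) (μ := μ) (η ^ 2) (fun ω => (X (n + 1) ω) ^ 2)
      have h5 : μ[X (n + 1) | ℱ n] =ᵐ[μ] 0 := by
        have := hmd (n + 1) hn1
        rwa [Nat.add_sub_cancel] at this
      have h6 : V (n + 1) = μ[fun ω' => (X (n + 1) ω') ^ 2 | ℱ n] := by
        have := hV (n + 1)
        rwa [Nat.add_sub_cancel] at this
      filter_upwards [h1, h2, h3, h4, h5] with ω e1 e2 e3 e4 e5
      rw [e1, Pi.add_apply, e2, Pi.add_apply, e3, e4]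
      simp only [condExp_const (ℱ.le n), Pi.smul_apply, smul_eq_mul, e5, Pi.zero_apply, h6]
      ring
    have hGc : μ[G | ℱ n] ≤ᵐ[μ] fun ω => 1 + η ^ 2 * V (n + 1) ω :=
      (condExp_mono hGint hQint hGQ).trans_eq hcondQ
    -- main chain
    rw [hsplit]
    have e1 : ∫ ω, F ω * G ω ∂μ = ∫ ω, (μ[F * G | ℱ n]) ω ∂μ :=
      (integral_condExp (ℱ.le n) (f := F * G)).symm
    have hFcGint : Integrable (F * μ[G | ℱ n]) μ := integrable_condExp.congr hpull
    have e2 : ∫ ω, (μ[F * G | ℱ n]) ω ∂μ = ∫ ω, F ω * (μ[G | ℱ n]) ω ∂μ :=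
      integral_congr_ae hpull
    have hmid_int : Integrable (fun ω => F ω * (1 + η ^ 2 * V (n + 1) ω)) μ := by
      refine integrable_of_ae_bound
        ((hFm0.mul (measurable_const.add (measurable_const.mul
          (hVm (n + 1))))).aestronglyMeasurable)
        (C := Real.exp (η * (n * R)) * (1 + η ^ 2 * R ^ 2)) ?_
      filter_upwards [hFbd, hVnn' , hVle'] with ω h1 h2 h3
      rw [abs_mul]
      have : |1 + η ^ 2 * V (n + 1) ω| ≤ 1 + η ^ 2 * R ^ 2 := by
        rw [abs_of_nonneg (by nlinarith [h2 (n + 1), sq_nonneg η])]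
        nlinarith [h3 (n + 1), sq_nonneg η]
      exact mul_le_mul h1 this (abs_nonneg _) (Real.exp_pos _).le
    have e3 : ∫ ω, F ω * (μ[G | ℱ n]) ω ∂μ
        ≤ ∫ ω, F ω * (1 + η ^ 2 * V (n + 1) ω) ∂μ := by
      refine integral_mono_ae hFcGint hmid_int ?_
      filter_upwards [hGc] with ω hω
      exact mul_le_mul_of_nonneg_left hω (hFnn ω)
    have hend_eq : (fun ω => F ω * Real.exp (η ^ 2 * V (n + 1) ω))
        = fun ω => Real.exp (η * ∑ t ∈ Finset.Icc 1 n, X t ω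
            - η ^ 2 * ∑ t ∈ Finset.Icc 1 n, V t ω) := by
      funext ω; rw [hF, ← Real.exp_add]; ring_nf
    have hend_int : Integrable (fun ω => F ω * Real.exp (η ^ 2 * V (n + 1) ω)) μ := by
      rw [hend_eq]
      refine integrable_of_ae_bound
        ((((measurable_const.mul (Finset.measurable_sum _ fun t _ => hXm t)).sub
          (measurable_const.mul (Finset.measurable_sum _ fun t _ => hVm t))).exp).aestronglyMeasurable)
        (C := Real.exp (η * (n * R))) ?_
      filter_upwards [hball, hVnn'] with ω h1 h2
      rw [abs_of_nonneg (Real.exp_pos _).le]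
      apply Real.exp_le_exp.2
      have hs : ∑ t ∈ Finset.Icc 1 n, X t ω ≤ n * R := by
        calc ∑ t ∈ Finset.Icc 1 n, X t ω ≤ ∑ t ∈ Finset.Icc 1 n, R :=
          Finset.sum_le_sum fun t _ => (abs_le.1 (h1 t)).2
        _ = n * R := by rw [Finset.sum_const, Nat.card_Icc]; simp
      have hw : 0 ≤ ∑ t ∈ Finset.Icc 1 n, V t ω :=
        Finset.sum_nonneg fun t _ => h2 t
      nlinarith [sq_nonneg η, mul_le_mul_of_nonneg_left hs hη.le]
    have e4 : ∫ ω, F ω * (1 + η ^ 2 * V (n + 1) ω) ∂μ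
        ≤ ∫ ω, F ω * Real.exp (η ^ 2 * V (n + 1) ω) ∂μ := by
      refine integral_mono_ae hmid_int hend_int ?_
      refine Filter.Eventually.of_forall fun ω => ?_
      refine mul_le_mul_of_nonneg_left ?_ (hFnn ω)
      calc 1 + η ^ 2 * V (n + 1) ω = η ^ 2 * V (n + 1) ω + 1 := by ring
        _ ≤ Real.exp (η ^ 2 * V (n + 1) ω) := Real.add_one_le_exp _
    calc ∫ ω, F ω * G ω ∂μ ≤ ∫ ω, F ω * Real.exp (η ^ 2 * V (n + 1) ω) ∂μ := by
          rw [e1, e2]; exact e3.trans e4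
      _ ≤ 1 := by rw [hend_eq]; exact ih


theorem freedman_inequality
    {Ω : Type*} {m0 : MeasurableSpace Ω} (μ : Measure Ω) [IsProbabilityMeasure μ]
    (ℱ : Filtration ℕ m0) (T : ℕ) (X : ℕ → Ω → ℝ) (R η δ : ℝ)
    (hR : 0 < R) (hadapted : Adapted ℱ X)
    (hint : ∀ t, Integrable (X t) μ)
    (hmd : ∀ t, 1 ≤ t → μ[X t | ℱ (t - 1)] =ᵐ[μ] 0)
    (hbdd : ∀ t, ∀ᵐ ω ∂μ, |X t ω| ≤ R)
    (hη : 0 < η) (hηR : η ≤ 1 / R) (hδ : 0 < δ) (hδ1 : δ ≤ 1) :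
    ENNReal.ofReal (1 - δ) ≤
      μ {ω | ∑ t ∈ Finset.Icc 1 T, X t ω ≤
        η * ∑ t ∈ Finset.Icc 1 T, (μ[fun ω' => (X t ω') ^ 2 | ℱ (t - 1)]) ω
          + Real.log (1 / δ) / η} := by
  have key := freedman_key μ ℱ X R η hR hadapted hint hmd hbdd hη hηR
      (fun t => μ[fun ω' => (X t ω') ^ 2 | ℱ (t - 1)]) (fun t => rfl) T
  set Y : Ω → ℝ := fun ω => Real.exp (η * ∑ t ∈ Finset.Icc 1 T, X t ω
      - η ^ 2 * ∑ t ∈ Finset.Icc 1 T, (μ[fun ω' => (X t ω') ^ 2 | ℱ (t - 1)]) ω) with hY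
  have hXm : ∀ t, Measurable (X t) := fun t => (hadapted t).mono (ℱ.le t) le_rfl
  have hVm : ∀ t, Measurable (μ[fun ω' => (X t ω') ^ 2 | ℱ (t - 1)]) := fun t =>
    (stronglyMeasurable_condExp.mono (ℱ.le (t - 1))).measurable
  have hYm : Measurable Y :=
    ((measurable_const.mul (Finset.measurable_sum _ fun t _ => hXm t)).sub
      (measurable_const.mul (Finset.measurable_sum _ fun t _ => hVm t))).exp
  have hYnn : 0 ≤ᵐ[μ] Y := Filter.Eventually.of_forall fun ω => (Real.exp_pos _).le
  have hVnn : ∀ t, ∀ᵐ ω ∂μ, 0 ≤ (μ[fun ω' => (X t ω') ^ 2 | ℱ (t - 1)]) ω := fun t =>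
    condExp_nonneg (Filter.Eventually.of_forall fun ω => sq_nonneg _)
  have hYbd : ∀ᵐ ω ∂μ, |Y ω| ≤ Real.exp (η * (T * R)) := by
    filter_upwards [ae_all_iff.2 hbdd, ae_all_iff.2 hVnn] with ω h1 h2
    rw [abs_of_nonneg (Real.exp_pos _).le]
    apply Real.exp_le_exp.2
    have hs : ∑ t ∈ Finset.Icc 1 T, X t ω ≤ T * R := by
      calc ∑ t ∈ Finset.Icc 1 T, X t ω ≤ ∑ t ∈ Finset.Icc 1 T, R :=
        Finset.sum_le_sum fun t _ => (abs_le.1 (h1 t)).2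
      _ = T * R := by rw [Finset.sum_const, Nat.card_Icc]; simp
    have hw : 0 ≤ ∑ t ∈ Finset.Icc 1 T, (μ[fun ω' => (X t ω') ^ 2 | ℱ (t - 1)]) ω :=
      Finset.sum_nonneg fun t _ => h2 t
    nlinarith [sq_nonneg η, mul_le_mul_of_nonneg_left hs hη.le]
  have hYint : Integrable Y μ := integrable_of_ae_bound hYm.aestronglyMeasurable hYbd
  -- Markov's inequality
  have hMarkov := mul_meas_ge_le_integral_of_nonneg hYnn hYint (1 / δ)
  have hAle : (μ {ω | 1 / δ ≤ Y ω}).toReal ≤ δ := by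
    have h1 := hMarkov.trans key
    have h2 : (0 : ℝ) ≤ (μ {ω | 1 / δ ≤ Y ω}).toReal := ENNReal.toReal_nonneg
    rw [div_mul_eq_mul_div, div_le_one hδ] at h1
    change 1 * (μ {x | 1 / δ ≤ Y x}).toReal ≤ δ at h1
    linarith
  have hAmeas : MeasurableSet {ω | 1 / δ ≤ Y ω} := measurableSet_le measurable_const hYm
  have hA : μ {ω | 1 / δ ≤ Y ω} ≤ ENNReal.ofReal δ :=
    (ENNReal.le_ofReal_iff_toReal_le (measure_ne_top μ _) hδ.le).2 hAle
  have hsub : {ω | 1 / δ ≤ Y ω}ᶜ ⊆ {ω | ∑ t ∈ Finset.Icc 1 T, X t ω ≤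
      η * ∑ t ∈ Finset.Icc 1 T, (μ[fun ω' => (X t ω') ^ 2 | ℱ (t - 1)]) ω
        + Real.log (1 / δ) / η} := by
    intro ω hω
    simp only [Set.mem_compl_iff, Set.mem_setOf_eq, not_le] at hω
    simp only [Set.mem_setOf_eq]
    have hlt : Y ω < Real.exp (Real.log (1 / δ)) := by
      rwa [Real.exp_log (by positivity)]
    rw [hY] at hlt
    have h3 := Real.exp_lt_exp.1 hlt
    set S := ∑ t ∈ Finset.Icc 1 T, X t ω
    set W := ∑ t ∈ Finset.Icc 1 T, (μ[fun ω' => (X t ω') ^ 2 | ℱ (t - 1)]) ω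
    have h4 : η * S ≤ η * (η * W + Real.log (1 / δ) / η) := by
      have h5 : η * (η * W + Real.log (1 / δ) / η) = η ^ 2 * W + Real.log (1 / δ) := by
        field_simp
      nlinarith
    exact le_of_mul_le_mul_left h4 hη
  calc ENNReal.ofReal (1 - δ) = 1 - ENNReal.ofReal δ := by
        rw [ENNReal.ofReal_sub _ hδ.le, ENNReal.ofReal_one]
    _ ≤ 1 - μ {ω | 1 / δ ≤ Y ω} := tsub_le_tsub_left hA 1
    _ = μ {ω | 1 / δ ≤ Y ω}ᶜ := (prob_compl_eq_one_sub hAmeas).symm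
    _ ≤ _ := measure_mono hsub
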